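/- arXiv:1704.03064 — 3 statements merged into one kernel-verified Lean document; each statement's English description precedes it below -/
import Mathlib

section
/- Let n, m be positive integers with m ≤ n. Let J₁ ∈ ℝⁿ (the transposed objective gradient), F₂ : ℝⁿ → ℝᵐ a map, x* ∈ ℝⁿ, J₂ an m×n real matrix with full row rank (the Jacobian of F₂ at x*), C a symmetric positive definite n×n real matrix, and α ∈ (0,1). Define G := (Iₙ − T^C J₂) C⁻¹ J₁ and Δx* := −α·G − T₂·F₂(x*). If Δx* = 0, then F₂(x*) = 0 and there exists λ ∈ ℝᵐ such that J₁ + J₂ᵀ λ = 0; that is, x* satisfies the KKT optimality conditions of the equality-constrained problem min F₁(x) s.t. F₂(x) = 0 (Theorem 1: any fixed point of the interpolated SQP iteration is a KKT point). -/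
open Matrix

lemma aux_posdef {m n : ℕ} (J₂ : Matrix (Fin m) (Fin n) ℝ)
    (hJ₂ : Function.Surjective J₂.mulVec)
    (A : Matrix (Fin n) (Fin n) ℝ) (hA : A.PosDef) :
    (J₂ * A * J₂ᵀ).PosDef := by
  have hker : ∀ v : Fin m → ℝ, J₂ᵀ.mulVec v = 0 → v = 0 := by
    intro v hv
    obtain ⟨x, hx⟩ := hJ₂ v
    have : v ⬝ᵥ v = 0 := by
      have h1 : v ⬝ᵥ J₂.mulVec x = (J₂ᵀ.mulVec v) ⬝ᵥ x := by
        rw [mulVec_transpose, dotProduct_mulVec]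
      rw [hx] at h1
      rw [h1, hv, zero_dotProduct]
    exact (dotProduct_self_eq_zero).mp this
  refine Matrix.posDef_iff_dotProduct_mulVec.mpr ⟨?_, ?_⟩
  · have hAh := hA.isHermitian.eq
    unfold Matrix.IsHermitian
    simp only [conjTranspose_mul, conjTranspose_eq_transpose_of_trivial,
      transpose_transpose, Matrix.mul_assoc] at *
    simp [transpose_mul, Matrix.mul_assoc, hAh]
  · intro x hx
    have h1 : star x ⬝ᵥ (J₂ * A * J₂ᵀ).mulVec x
        = star (J₂ᵀ.mulVec x) ⬝ᵥ A.mulVec (J₂ᵀ.mulVec x) := by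
      simp only [star_trivial, ← mulVec_mulVec]
      rw [mulVec_transpose, dotProduct_mulVec]
    rw [h1]
    exact hA.dotProduct_mulVec_pos (fun h => hx (hker x h))

open Matrix

/-- `T^C := C⁻¹ J₂ᵀ (J₂ C⁻¹ J₂ᵀ)⁻¹`. -/
noncomputable def TCmat {m n : ℕ} (J₂ : Matrix (Fin m) (Fin n) ℝ)
    (C : Matrix (Fin n) (Fin n) ℝ) : Matrix (Fin n) (Fin m) ℝ :=
  C⁻¹ * J₂ᵀ * (J₂ * C⁻¹ * J₂ᵀ)⁻¹

/-- Moore–Penrose generalized right inverse `T₂ := J₂ᵀ (J₂ J₂ᵀ)⁻¹`. -/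
noncomputable def T2 {m n : ℕ} (J₂ : Matrix (Fin m) (Fin n) ℝ) :
    Matrix (Fin n) (Fin m) ℝ :=
  J₂ᵀ * (J₂ * J₂ᵀ)⁻¹

theorem fixed_point_is_KKT {n m : ℕ} (hn : 0 < n) (hm : 0 < m) (hmn : m ≤ n)
    (J₁ : Fin n → ℝ) (F₂ : (Fin n → ℝ) → (Fin m → ℝ)) (xstar : Fin n → ℝ)
    (J₂ : Matrix (Fin m) (Fin n) ℝ) (hJ₂ : Function.Surjective J₂.mulVec)
    (C : Matrix (Fin n) (Fin n) ℝ) (hC : C.PosDef)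
    (α : ℝ) (hα : α ∈ Set.Ioo (0 : ℝ) 1)
    (G : Fin n → ℝ) (hG : G = ((1 - TCmat J₂ C * J₂) * C⁻¹).mulVec J₁)
    (Δx : Fin n → ℝ) (hΔx : Δx = -(α • G) - (T2 J₂).mulVec (F₂ xstar))
    (hfix : Δx = 0) :
    F₂ xstar = 0 ∧ ∃ lam : Fin m → ℝ, J₁ + J₂ᵀ.mulVec lam = 0 := by
  have hM : (J₂ * C⁻¹ * J₂ᵀ).PosDef := aux_posdef J₂ hJ₂ C⁻¹ hC.inv
  have hN : (J₂ * J₂ᵀ).PosDef := by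
    have := aux_posdef J₂ hJ₂ 1 Matrix.PosDef.one
    simpa using this
  have hMdet : IsUnit (J₂ * C⁻¹ * J₂ᵀ).det :=
    (Matrix.isUnit_iff_isUnit_det _).mp hM.isUnit
  have hNdet : IsUnit (J₂ * J₂ᵀ).det :=
    (Matrix.isUnit_iff_isUnit_det _).mp hN.isUnit
  have hCdet : IsUnit C.det := (Matrix.isUnit_iff_isUnit_det _).mp hC.isUnit
  have hMT : J₂ * TCmat J₂ C = 1 := by
    unfold TCmat
    rw [← Matrix.mul_assoc, ← Matrix.mul_assoc]
    exact Matrix.mul_nonsing_inv _ hMdet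
  have hT2 : J₂ * T2 J₂ = 1 := by
    unfold T2
    rw [← Matrix.mul_assoc]
    exact Matrix.mul_nonsing_inv _ hNdet
  have hJG : J₂.mulVec G = 0 := by
    rw [hG, mulVec_mulVec, ← Matrix.mul_assoc, Matrix.mul_sub, Matrix.mul_one,
      ← Matrix.mul_assoc, hMT, Matrix.one_mul, sub_self, Matrix.zero_mul,
      zero_mulVec]
  have h := hΔx.symm.trans hfix
  have heq : α • G + (T2 J₂).mulVec (F₂ xstar) = 0 := by
    linear_combination (norm := module) -h
  have hF2 : F₂ xstar = 0 := by
    have h2 : J₂.mulVec (α • G + (T2 J₂).mulVec (F₂ xstar)) = 0 := by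
      rw [heq, mulVec_zero]
    rw [mulVec_add, mulVec_smul, hJG, smul_zero, zero_add, mulVec_mulVec,
      hT2, one_mulVec] at h2
    exact h2
  refine ⟨hF2, ?_⟩
  have hGz : G = 0 := by
    rw [hF2, mulVec_zero, add_zero] at heq
    rcases smul_eq_zero.mp heq with h' | h'
    · exact absurd h' (ne_of_gt hα.1)
    · exact h'
  refine ⟨-(((J₂ * C⁻¹ * J₂ᵀ)⁻¹ * (J₂ * C⁻¹)).mulVec J₁), ?_⟩
  have hG0 : ((1 - TCmat J₂ C * J₂) * C⁻¹).mulVec J₁ = 0 := hGz ▸ hG.symm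
  have hC0 : C⁻¹.mulVec J₁ = (TCmat J₂ C * (J₂ * C⁻¹)).mulVec J₁ := by
    rw [Matrix.sub_mul, sub_mulVec, Matrix.one_mul, sub_eq_zero] at hG0
    rw [hG0, Matrix.mul_assoc]
  have hkey : J₁ = J₂ᵀ.mulVec (((J₂ * C⁻¹ * J₂ᵀ)⁻¹ * (J₂ * C⁻¹)).mulVec J₁) := by
    have h3 := congrArg (fun v => C.mulVec v) hC0
    simp only [mulVec_mulVec] at h3
    rw [Matrix.mul_nonsing_inv C hCdet, one_mulVec] at h3
    have hCT : C * (TCmat J₂ C * (J₂ * C⁻¹))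
        = J₂ᵀ * ((J₂ * C⁻¹ * J₂ᵀ)⁻¹ * (J₂ * C⁻¹)) := by
      unfold TCmat
      simp only [Matrix.mul_assoc]
      rw [← Matrix.mul_assoc C C⁻¹, Matrix.mul_nonsing_inv C hCdet, Matrix.one_mul]
    conv_lhs => rw [h3, hCT, ← mulVec_mulVec]
  rw [mulVec_neg]
  nth_rewrite 1 [hkey]
  exact add_neg_cancel _
end

section
/- Let n, m be positive integers with m ≤ n, let B be a symmetric n×n real matrix, J₂ an m×n real matrix with full row rank, J₁ ∈ ℝⁿ and F₂ ∈ ℝᵐ vectors. Assume B is positive definite on the null space of J₂ (dᵀ B d > 0 for all nonzero d with J₂ d = 0) and let c̄ be such that C := B + c̄ J₂ᵀ J₂ is positive definite. Then the vector Δx := −(Iₙ − T^C J₂) C⁻¹ J₁ − T^C F₂ satisfies the QP-subproblem KKT system: J₂ Δx + F₂ = 0 and there exists λ ∈ ℝᵐ with B Δx + J₁ + J₂ᵀ λ = 0; moreover Δx is unique, i.e. if Δx′ and λ′ satisfy B Δx′ + J₁ + J₂ᵀ λ′ = 0 and J₂ Δx′ + F₂ = 0, then Δx′ = Δx (explicit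 expression (10) for the SQP search direction). -/
open Matrix

theorem sqp_direction_solves_QP_KKT {n m : ℕ} (hn : 0 < n) (hm : 0 < m) (hmn : m ≤ n)
    (B : Matrix (Fin n) (Fin n) ℝ) (hB : B.IsSymm)
    (J₂ : Matrix (Fin m) (Fin n) ℝ) (hJ₂ : Function.Surjective J₂.mulVec)
    (J₁ : Fin n → ℝ) (F₂ : Fin m → ℝ)
    (hBpos : ∀ d : Fin n → ℝ, d ≠ 0 → J₂.mulVec d = 0 → 0 < d ⬝ᵥ B.mulVec d)
    (cbar : ℝ) (C : Matrix (Fin n) (Fin n) ℝ) (hC : C = B + cbar • (J₂ᵀ * J₂))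
    (hCpos : C.PosDef)
    (Δx : Fin n → ℝ)
    (hΔx : Δx = -(((1 - TCmat J₂ C * J₂) * C⁻¹).mulVec J₁) - (TCmat J₂ C).mulVec F₂) :
    (J₂.mulVec Δx + F₂ = 0) ∧
    (∃ lam : Fin m → ℝ, B.mulVec Δx + J₁ + J₂ᵀ.mulVec lam = 0) ∧
    (∀ (Δx' : Fin n → ℝ) (lam' : Fin m → ℝ),
      B.mulVec Δx' + J₁ + J₂ᵀ.mulVec lam' = 0 → J₂.mulVec Δx' + F₂ = 0 → Δx' = Δx) := by
  -- J₂ᵀ has trivial kernel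
  have hJTker : ∀ x : Fin m → ℝ, J₂ᵀ.mulVec x = 0 → x = 0 := by
    intro x hx
    obtain ⟨y, hy⟩ := hJ₂ x
    have h1 : x ⬝ᵥ x = 0 := by
      calc x ⬝ᵥ x = x ⬝ᵥ J₂.mulVec y := by rw [hy]
        _ = (J₂ᵀ.mulVec x) ⬝ᵥ y := by
            rw [Matrix.dotProduct_mulVec, ← Matrix.mulVec_transpose]
        _ = 0 := by rw [hx, zero_dotProduct]
    exact dotProduct_self_eq_zero.mp h1
  -- C⁻¹ is positive definite
  have hCinvPos : (C⁻¹).PosDef := hCpos.inv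
  -- S := J₂ C⁻¹ J₂ᵀ is positive definite
  set S : Matrix (Fin m) (Fin m) ℝ := J₂ * C⁻¹ * J₂ᵀ with hS
  have hSherm : S.IsHermitian := by
    have h : (C⁻¹)ᵀ = C⁻¹ := hCinvPos.isHermitian
    simp only [hS, Matrix.IsHermitian, Matrix.conjTranspose_eq_transpose_of_trivial,
      Matrix.transpose_mul, Matrix.transpose_transpose, h, Matrix.mul_assoc]
  have hSpos : S.PosDef := by
    refine Matrix.PosDef.of_dotProduct_mulVec_pos hSherm (fun x hx => ?_)
    have hJx : J₂ᵀ.mulVec x ≠ 0 := fun h => hx (hJTker x h)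
    have h2 := hCinvPos.dotProduct_mulVec_pos hJx
    have key : x ⬝ᵥ S *ᵥ x = (J₂ᵀ *ᵥ x) ⬝ᵥ (C⁻¹ *ᵥ (J₂ᵀ *ᵥ x)) := by
      rw [hS, Matrix.mul_assoc, ← Matrix.mulVec_mulVec, ← Matrix.mulVec_mulVec,
        Matrix.dotProduct_mulVec, ← Matrix.mulVec_transpose]
    have hstar : star x = x := by simp
    rw [hstar, key]
    simpa using h2
  have hCdet : IsUnit C.det := isUnit_iff_ne_zero.mpr (ne_of_gt hCpos.det_pos)
  have hSdet : IsUnit S.det := isUnit_iff_ne_zero.mpr (ne_of_gt hSpos.det_pos)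
  have hCC : C * C⁻¹ = 1 := Matrix.mul_nonsing_inv C hCdet
  have hSS : S * S⁻¹ = 1 := Matrix.mul_nonsing_inv S hSdet
  set T : Matrix (Fin n) (Fin m) ℝ := TCmat J₂ C with hT
  have hJT : J₂ * T = 1 := by
    rw [hT, TCmat, ← Matrix.mul_assoc, ← Matrix.mul_assoc, ← hS]
    exact hSS
  have hCT : C * T = J₂ᵀ * S⁻¹ := by
    rw [hT, TCmat, ← Matrix.mul_assoc, ← Matrix.mul_assoc, hCC, Matrix.one_mul, hS]
  have hBeq : B = C - cbar • (J₂ᵀ * J₂) := by rw [hC]; abel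
  have hBT : B * T = J₂ᵀ * S⁻¹ - cbar • J₂ᵀ := by
    rw [hBeq, Matrix.sub_mul, hCT, Matrix.smul_mul, Matrix.mul_assoc, hJT, Matrix.mul_one]
  -- feasibility
  have hJΔ : J₂.mulVec Δx = -F₂ := by
    rw [hΔx]
    have h1 : J₂ * ((1 - T * J₂) * C⁻¹) = 0 := by
      rw [← Matrix.mul_assoc, Matrix.mul_sub, Matrix.mul_one, ← Matrix.mul_assoc, hJT,
        Matrix.one_mul, sub_self, Matrix.zero_mul]
    rw [Matrix.mulVec_sub, Matrix.mulVec_neg, Matrix.mulVec_mulVec, Matrix.mulVec_mulVec,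
      h1, hJT]
    simp
  have part1 : J₂.mulVec Δx + F₂ = 0 := by rw [hJΔ]; abel
  -- existence of the multiplier
  have hexist : B.mulVec Δx + J₁ + J₂ᵀ.mulVec ((-(S⁻¹ * J₂ * C⁻¹)).mulVec J₁ +
      (S⁻¹ - cbar • 1).mulVec F₂) = 0 := by
    have hM1 : B * -((1 - T * J₂) * C⁻¹) + 1 + J₂ᵀ * -(S⁻¹ * J₂ * C⁻¹) = 0 := by
      have hBTJ : B * ((1 - T * J₂) * C⁻¹) = 1 - J₂ᵀ * (S⁻¹ * (J₂ * C⁻¹)) := by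
        rw [← Matrix.mul_assoc, Matrix.mul_sub, Matrix.mul_one, ← Matrix.mul_assoc, hBT]
        rw [hBeq]
        simp only [Matrix.sub_mul, Matrix.smul_mul, Matrix.mul_assoc, hCC]
        abel
      rw [Matrix.mul_neg, hBTJ]
      simp only [Matrix.mul_assoc, Matrix.mul_neg]
      abel
    have hM2 : B * -T + J₂ᵀ * (S⁻¹ - cbar • 1) = 0 := by
      rw [Matrix.mul_neg, hBT, Matrix.mul_sub, Matrix.mul_smul, Matrix.mul_one]
      abel
    have expand : B.mulVec Δx + J₁ + J₂ᵀ.mulVec ((-(S⁻¹ * J₂ * C⁻¹)).mulVec J₁ +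
        (S⁻¹ - cbar • 1).mulVec F₂) =
        (B * -((1 - T * J₂) * C⁻¹) + 1 + J₂ᵀ * -(S⁻¹ * J₂ * C⁻¹)).mulVec J₁ +
        (B * -T + J₂ᵀ * (S⁻¹ - cbar • 1)).mulVec F₂ := by
      rw [hΔx]
      simp only [Matrix.mulVec_sub, Matrix.mulVec_add, Matrix.mulVec_neg,
        Matrix.add_mulVec, Matrix.mulVec_mulVec, Matrix.neg_mulVec, Matrix.one_mulVec,
        Matrix.mul_neg]
      abel
    rw [expand, hM1, hM2, Matrix.zero_mulVec, Matrix.zero_mulVec, add_zero]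
  refine ⟨part1, ⟨_, hexist⟩, ?_⟩
  -- uniqueness
  intro Δx' lam' hKKT hfeas
  by_contra hne
  set d := Δx' - Δx with hd
  have hdne : d ≠ 0 := fun h => hne (sub_eq_zero.mp h)
  have hJd : J₂.mulVec d = 0 := by
    have h3 : J₂.mulVec Δx' = -F₂ := by
      linear_combination (norm := module) hfeas
    rw [hd, Matrix.mulVec_sub, hJΔ, h3]
    abel
  set lam : Fin m → ℝ := (-(S⁻¹ * J₂ * C⁻¹)).mulVec J₁ + (S⁻¹ - cbar • 1).mulVec F₂ with hlamdef
  have hBd : B.mulVec d = J₂ᵀ.mulVec (lam - lam') := by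
    have h1 : B.mulVec Δx' = -J₁ - J₂ᵀ.mulVec lam' := by
      linear_combination (norm := module) hKKT
    have h2 : B.mulVec Δx = -J₁ - J₂ᵀ.mulVec lam := by
      linear_combination (norm := module) hexist
    rw [hd, Matrix.mulVec_sub, h1, h2, Matrix.mulVec_sub]
    abel
  have hdBd : d ⬝ᵥ B.mulVec d = 0 := by
    rw [hBd, Matrix.dotProduct_mulVec, Matrix.vecMul_transpose, hJd, zero_dotProduct]
  exact absurd hdBd (ne_of_gt (hBpos d hdne hJd))
end

section
/- Let J₂ be a real m×n matrix with full row rank, C a symmetric positive definite n×n real matrix, J₁ ∈ ℝⁿ, F₂ ∈ ℝᵐ, and α ∈ (0,1). Let Δx^{SQP} := −(Iₙ − T^C J₂) C⁻¹ J₁ − T^C F₂ and Δx^f := −( (1/(1−α)) T₂ − (α/(1−α)) T^C ) F₂. Then the interpolated direction satisfies the identity α Δx^{SQP} + (1−α) Δx^f = −α (Iₙ − T^C J₂) C⁻¹ J₁ − T₂ F₂, and this interpolated direction Δx satisfies the linearized constraint J₂ Δx + F₂ = 0 (derivation of update (19) and feasibility relation (21)). -/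
open Matrix

lemma aux_posdef_s5 {m n : ℕ} (J : Matrix (Fin m) (Fin n) ℝ)
    (hJ : Function.Surjective J.mulVec)
    {B : Matrix (Fin n) (Fin n) ℝ} (hB : B.PosDef) : (J * B * Jᵀ).PosDef := by
  obtain ⟨R, hR⟩ := mulVec_surjective_iff_exists_right_inverse.mp hJ
  refine posDef_iff_dotProduct_mulVec.mpr ⟨?_, ?_⟩
  · have hBt : Bᵀ = B := by
      simpa [conjTranspose_eq_transpose_of_trivial] using hB.isHermitian.eq
    simp [IsHermitian, conjTranspose_mul, conjTranspose_eq_transpose_of_trivial,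
      Matrix.mul_assoc, hBt]
  · intro x hx
    have hJx : Jᵀ *ᵥ x ≠ 0 := by
      intro h
      apply hx
      have hx' : x = Rᵀ *ᵥ (Jᵀ *ᵥ x) := by
        rw [mulVec_mulVec, ← transpose_mul, hR, transpose_one, one_mulVec]
      rw [hx', h, mulVec_zero]
    have := hB.dotProduct_mulVec_pos hJx
    have key : star x ⬝ᵥ (J * B * Jᵀ) *ᵥ x
        = star (Jᵀ *ᵥ x) ⬝ᵥ B *ᵥ (Jᵀ *ᵥ x) := by
      simp only [star_trivial, mulVec_mulVec]
      rw [← mulVec_mulVec, dotProduct_mulVec, ← mulVec_transpose, transpose_mul,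
        ← mulVec_mulVec, mulVec_transpose, ← dotProduct_mulVec, mulVec_mulVec]
    rwa [key]

lemma aux_right_inv {m n : ℕ} (J : Matrix (Fin m) (Fin n) ℝ)
    (hJ : Function.Surjective J.mulVec)
    {B : Matrix (Fin n) (Fin n) ℝ} (hB : B.PosDef) :
    J * (B * Jᵀ * (J * B * Jᵀ)⁻¹) = 1 := by
  have h := (aux_posdef_s5 J hJ hB).isUnit
  rw [← Matrix.mul_assoc, ← Matrix.mul_assoc,
    Matrix.mul_nonsing_inv _ ((isUnit_iff_isUnit_det _).mp h)]

lemma J_mul_TC {m n : ℕ} (J₂ : Matrix (Fin m) (Fin n) ℝ)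
    (hJ₂ : Function.Surjective J₂.mulVec)
    (C : Matrix (Fin n) (Fin n) ℝ) (hC : C.PosDef) :
    J₂ * TCmat J₂ C = 1 := by
  have := aux_right_inv J₂ hJ₂ hC.inv
  rw [TCmat]
  rw [← Matrix.mul_assoc] at this ⊢
  exact this

lemma J_mul_T2 {m n : ℕ} (J₂ : Matrix (Fin m) (Fin n) ℝ)
    (hJ₂ : Function.Surjective J₂.mulVec) :
    J₂ * T2 J₂ = 1 := by
  have h1 : (1 : Matrix (Fin n) (Fin n) ℝ).PosDef := Matrix.PosDef.one
  have := aux_right_inv J₂ hJ₂ h1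
  rw [T2]
  simpa [Matrix.mul_one, Matrix.one_mul, Matrix.mul_assoc] using this

theorem interpolated_direction_identity_and_feasibility {n m : ℕ}
    (J₂ : Matrix (Fin m) (Fin n) ℝ) (hJ₂ : Function.Surjective J₂.mulVec)
    (C : Matrix (Fin n) (Fin n) ℝ) (hC : C.PosDef)
    (J₁ : Fin n → ℝ) (F₂ : Fin m → ℝ) (α : ℝ) (hα : α ∈ Set.Ioo (0 : ℝ) 1)
    (ΔxSQP : Fin n → ℝ)
    (hΔxSQP : ΔxSQP = -(((1 - TCmat J₂ C * J₂) * C⁻¹).mulVec J₁) - (TCmat J₂ C).mulVec F₂)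
    (Δxf : Fin n → ℝ)
    (hΔxf : Δxf = -(((1 / (1 - α)) • T2 J₂ - (α / (1 - α)) • TCmat J₂ C).mulVec F₂))
    (Δx : Fin n → ℝ) (hΔx : Δx = α • ΔxSQP + (1 - α) • Δxf) :
    Δx = -(α • (((1 - TCmat J₂ C * J₂) * C⁻¹).mulVec J₁)) - (T2 J₂).mulVec F₂ ∧
    J₂.mulVec Δx + F₂ = 0 := by
  obtain ⟨hα0, hα1⟩ := hα
  have hne : (1 : ℝ) - α ≠ 0 := by linarith
  have hTC := J_mul_TC J₂ hJ₂ C hC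
  have hT2 := J_mul_T2 J₂ hJ₂
  have hid : Δx = -(α • (((1 - TCmat J₂ C * J₂) * C⁻¹).mulVec J₁)) - (T2 J₂).mulVec F₂ := by
    subst hΔx hΔxSQP hΔxf
    funext i
    simp only [Matrix.sub_mulVec, Matrix.smul_mulVec, Pi.add_apply, Pi.smul_apply,
      Pi.sub_apply, Pi.neg_apply, smul_eq_mul]
    field_simp
    ring
  refine ⟨hid, ?_⟩
  have h1 : J₂.mulVec ((T2 J₂).mulVec F₂) = F₂ := by
    rw [mulVec_mulVec, hT2, one_mulVec]
  have h2 : J₂ * ((1 - TCmat J₂ C * J₂) * C⁻¹) = 0 := by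
    rw [← Matrix.mul_assoc, Matrix.mul_sub, Matrix.mul_one, ← Matrix.mul_assoc, hTC,
      Matrix.one_mul, sub_self, Matrix.zero_mul]
  rw [hid]
  rw [sub_eq_add_neg, mulVec_add, mulVec_neg, mulVec_neg, mulVec_smul, mulVec_mulVec, h2,
    zero_mulVec, smul_zero, neg_zero, zero_add, h1, neg_add_cancel]
end
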